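/- Let ρ: E → E' be a morphism of rank-r locally free sheaves on a complex manifold (or smooth variety) M with smooth hypersurface D, such that z_D·ρ⁻¹ extends holomorphically across D where ρ is invertible off D, i.e., there exist holomorphic morphisms ρ: E → E' and τ: E' → E with τ∘ρ = z_D·Id_E and ρ∘τ = z_D·Id_{E'} for a local defining function z_D of D. Then at every point of D, rank(ρ|_D) + rank(τ|_D) ≥ r, and consequently ker(τ|_D) = im(ρ|_D) fiberwise at every point of D where both restrictions have locally constant rank. -/

import Mathlib

open PowerSeries

/-- (Fiberwise statement underlying Claim 3.8 of Chen–Sun.)  Let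
`ρ : E → E'` and `τ : E' → E` be holomorphic morphisms of rank-`r` bundles near a point of
the smooth hypersurface `D = {z = 0}` with `τ∘ρ = z·Id_E` and `ρ∘τ = z·Id_{E'}` for a
local defining function `z` of `D`.  Then, at every point of `D`,
`rank(ρ|_D) + rank(τ|_D) ≥ r`, and consequently `ker(τ|_D) = im(ρ|_D)` fiberwise.

Formalized in the transverse coordinate: `ρ`, `τ` are formal power series in `z` with
`r × r` complex matrix coefficients (after trivializing `E`, `E'`); `ρ|_D` and `τ|_D` are
the constant coefficients, and `X = z·Id`. -/
theorem rank_and_kernel_image_of_hecke_pair (r : ℕ)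
    (ρ τ : PowerSeries (Matrix (Fin r) (Fin r) ℂ))
    (h1 : τ * ρ = PowerSeries.X)
    (h2 : ρ * τ = PowerSeries.X) :
    r ≤ (PowerSeries.coeff 0 ρ).rank + (PowerSeries.coeff 0 τ).rank ∧
    LinearMap.range (Matrix.mulVecLin (PowerSeries.coeff 0 ρ)) =
      LinearMap.ker (Matrix.mulVecLin (PowerSeries.coeff 0 τ)) := by

  set A := PowerSeries.coeff 0 ρ with hA
  set B := PowerSeries.coeff 0 τ with hB
  have hA' : PowerSeries.constantCoeff ρ = A := by
    rw [hA, PowerSeries.coeff_zero_eq_constantCoeff]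
  have hB' : PowerSeries.constantCoeff τ = B := by
    rw [hB, PowerSeries.coeff_zero_eq_constantCoeff]
  have hBA : B * A = 0 := by
    have := congrArg (PowerSeries.coeff 0) h1
    simpa [PowerSeries.coeff_zero_eq_constantCoeff, map_mul, hA', hB'] using this
  have hAB : A * B = 0 := by
    have := congrArg (PowerSeries.coeff 0) h2
    simpa [PowerSeries.coeff_zero_eq_constantCoeff, map_mul, hA', hB'] using this
  have h2' : A * (PowerSeries.coeff 1 τ) + (PowerSeries.coeff 1 ρ) * B = 1 := by
    have := congrArg (PowerSeries.coeff 1) h2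
    simpa [PowerSeries.coeff_mul, Finset.Nat.sum_antidiagonal_eq_sum_range_succ_mk, Finset.sum_range_succ, hA', hB'] using this
  -- range = ker
  have hrk : LinearMap.range A.mulVecLin = LinearMap.ker B.mulVecLin := by
    ext x
    constructor
    · rintro ⟨y, rfl⟩
      simp only [LinearMap.mem_ker, Matrix.mulVecLin_apply]
      rw [Matrix.mulVec_mulVec, hBA, Matrix.zero_mulVec]
    · intro hx
      simp only [LinearMap.mem_ker, Matrix.mulVecLin_apply] at hx
      refine ⟨(PowerSeries.coeff 1 τ).mulVec x, ?_⟩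
      have : (A * (PowerSeries.coeff 1 τ) + (PowerSeries.coeff 1 ρ) * B).mulVec x = x := by
        rw [h2', Matrix.one_mulVec]
      simpa [Matrix.add_mulVec, ← Matrix.mulVec_mulVec, hx] using this
  refine ⟨?_, hrk⟩
  have hrn := LinearMap.finrank_range_add_finrank_ker B.mulVecLin
  have hdim : Module.finrank ℂ (Fin r → ℂ) = r := by simp
  rw [Matrix.rank, Matrix.rank, hrk]
  omega
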